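/- arXiv:1706.03955 — 2 statements merged into one kernel-verified Lean document; each statement's English description precedes it below -/
import Mathlib

section
/- The Markov kernels P^{X1|X3} and P^{X2|X3} are independent with respect to P^{X3} if and only if for every pair of bounded real measurable functions f1 on Ω1 and f2 on Ω2, the conditional expectations E[f1(X1)|X3] and E[f2(X2)|X3] are uncorrelated, i.e., E[ E(f1∘X1|X3) · E(f2∘X2|X3) ] = E(f1∘X1) · E(f2∘X2). -/
open MeasureTheory ProbabilityTheory

/-- The image (probability distribution) of a Markov kernel `M` under a measure `Q`:
`Q^M (A) = ∫ M(ω, A) dQ(ω)`. -/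
noncomputable def kernelImage {α β : Type*} [MeasurableSpace α] [MeasurableSpace β]
    (Q : Measure α) (M : ProbabilityTheory.Kernel α β) : Measure β :=
  Q.bind (fun a => M a)

/-- Two Markov kernels `M1, M2` on a probability space `(α, Q)` are `Q`-independent if the
image of their diagonal product is the product of their images. -/
def KernelIndep {α β γ : Type*} [MeasurableSpace α] [MeasurableSpace β] [MeasurableSpace γ]
    (Q : Measure α) (M1 : ProbabilityTheory.Kernel α β) (M2 : ProbabilityTheory.Kernel α γ) :
    Prop :=
  kernelImage Q (M1 ×ₖ M2) = (kernelImage Q M1).prod (kernelImage Q M2)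

open Set

lemma kernelImage_apply {α β : Type*} [MeasurableSpace α] [MeasurableSpace β]
    (Q : Measure α) (M : ProbabilityTheory.Kernel α β) {A : Set β} (hA : MeasurableSet A) :
    kernelImage Q M A = ∫⁻ a, M a A ∂Q :=
  Measure.bind_apply hA (Kernel.measurable M).aemeasurable

lemma kernelImage_condDistrib {Ω Ω1 Ω3 : Type*} [MeasurableSpace Ω] [MeasurableSpace Ω1]
    [MeasurableSpace Ω3] [StandardBorelSpace Ω1] [Nonempty Ω1]
    (P : Measure Ω) [IsFiniteMeasure P] (X1 : Ω → Ω1) (X3 : Ω → Ω3)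
    (hX1 : Measurable X1) (hX3 : Measurable X3) :
    kernelImage (P.map X3) (condDistrib X1 X3 P) = P.map X1 := by
  ext A hA
  rw [kernelImage_apply _ _ hA, Measure.map_apply hX1 hA,
    lintegral_map (Kernel.measurable_coe _ hA) hX3]
  have := setLIntegral_preimage_condDistrib (μ := P) hX3 hX1.aemeasurable hA MeasurableSet.univ
  simpa using this

lemma isProbabilityMeasure_kernelImage {α β : Type*} [MeasurableSpace α] [MeasurableSpace β]
    (Q : Measure α) [IsProbabilityMeasure Q] (M : ProbabilityTheory.Kernel α β)
    [IsMarkovKernel M] : IsProbabilityMeasure (kernelImage Q M) := by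
  constructor
  rw [kernelImage_apply _ _ MeasurableSet.univ]
  simp

lemma kernelImage_eq_snd_compProd {α β : Type*} [MeasurableSpace α] [MeasurableSpace β]
    (Q : Measure α) [SFinite Q] (M : ProbabilityTheory.Kernel α β) [IsSFiniteKernel M] :
    kernelImage Q M = (Q ⊗ₘ M).map Prod.snd := by
  ext A hA
  rw [kernelImage_apply _ _ hA, Measure.map_apply measurable_snd hA,
    Measure.compProd_apply (measurable_snd hA)]
  rfl

lemma integral_kernelImage {α β : Type*} [MeasurableSpace α] [MeasurableSpace β]
    (Q : Measure α) [IsProbabilityMeasure Q] (M : ProbabilityTheory.Kernel α β)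
    [IsMarkovKernel M] {f : β → ℝ} (hf : Measurable f) (C : ℝ) (hC : ∀ x, |f x| ≤ C) :
    ∫ y, f y ∂(kernelImage Q M) = ∫ a, ∫ y, f y ∂(M a) ∂Q := by
  have hint : Integrable (fun p : α × β => f p.2) (Q ⊗ₘ M) := by
    refine Integrable.mono' (integrable_const C) ?_ (ae_of_all _ fun p => ?_)
    · exact (hf.comp measurable_snd).aestronglyMeasurable
    · simpa [Real.norm_eq_abs] using hC p.2
  rw [kernelImage_eq_snd_compProd,
    integral_map measurable_snd.aemeasurable hf.aestronglyMeasurable,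
    Measure.integral_compProd hint]

lemma condexp_mul_key {Ω Ω1 Ω2 Ω3 : Type*} [MeasurableSpace Ω] [MeasurableSpace Ω1]
    [MeasurableSpace Ω2] [MeasurableSpace Ω3] [StandardBorelSpace Ω1] [Nonempty Ω1]
    [StandardBorelSpace Ω2] [Nonempty Ω2]
    (P : Measure Ω) [IsProbabilityMeasure P]
    (X1 : Ω → Ω1) (X2 : Ω → Ω2) (X3 : Ω → Ω3)
    (hX1 : Measurable X1) (hX2 : Measurable X2) (hX3 : Measurable X3)
    {f1 : Ω1 → ℝ} {f2 : Ω2 → ℝ} (hf1 : Measurable f1) (hf2 : Measurable f2)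
    {C1 C2 : ℝ} (hC1 : ∀ x, |f1 x| ≤ C1) (hC2 : ∀ x, |f2 x| ≤ C2) :
    ∫ ω, (P[fun ω' => f1 (X1 ω') | MeasurableSpace.comap X3 inferInstance]) ω
        * (P[fun ω' => f2 (X2 ω') | MeasurableSpace.comap X3 inferInstance]) ω ∂P
      = ∫ p, f1 p.1 * f2 p.2
          ∂(kernelImage (P.map X3) (condDistrib X1 X3 P ×ₖ condDistrib X2 X3 P)) := by
  haveI : IsProbabilityMeasure (P.map X3) := Measure.isProbabilityMeasure_map hX3.aemeasurable
  have hC1' : 0 ≤ C1 := (abs_nonneg _).trans (hC1 (Classical.arbitrary Ω1))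
  have hC2' : 0 ≤ C2 := (abs_nonneg _).trans (hC2 (Classical.arbitrary Ω2))
  have hint1 : Integrable (fun ω => f1 (X1 ω)) P := by
    refine Integrable.mono' (integrable_const C1) ?_ (ae_of_all _ fun ω => ?_)
    · exact (hf1.comp hX1).aestronglyMeasurable
    · simpa [Real.norm_eq_abs] using hC1 (X1 ω)
  have hint2 : Integrable (fun ω => f2 (X2 ω)) P := by
    refine Integrable.mono' (integrable_const C2) ?_ (ae_of_all _ fun ω => ?_)
    · exact (hf2.comp hX2).aestronglyMeasurable
    · simpa [Real.norm_eq_abs] using hC2 (X2 ω)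
  have h1 := condExp_ae_eq_integral_condDistrib hX3 hX1.aemeasurable
    hf1.stronglyMeasurable hint1
  have h2 := condExp_ae_eq_integral_condDistrib hX3 hX2.aemeasurable
    hf2.stronglyMeasurable hint2
  have hg1 : StronglyMeasurable fun x => ∫ y, f1 y ∂(condDistrib X1 X3 P x) :=
    (hf1.stronglyMeasurable.comp_measurable measurable_snd).integral_kernel_prod_right'
  have hg2 : StronglyMeasurable fun x => ∫ y, f2 y ∂(condDistrib X2 X3 P x) :=
    (hf2.stronglyMeasurable.comp_measurable measurable_snd).integral_kernel_prod_right'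
  have step1 : ∫ ω, (P[fun ω' => f1 (X1 ω') | MeasurableSpace.comap X3 inferInstance]) ω
        * (P[fun ω' => f2 (X2 ω') | MeasurableSpace.comap X3 inferInstance]) ω ∂P
      = ∫ ω, (∫ y, f1 y ∂(condDistrib X1 X3 P (X3 ω)))
          * (∫ y, f2 y ∂(condDistrib X2 X3 P (X3 ω))) ∂P :=
    integral_congr_ae (h1.mul h2)
  have step2 : ∫ ω, (∫ y, f1 y ∂(condDistrib X1 X3 P (X3 ω)))
          * (∫ y, f2 y ∂(condDistrib X2 X3 P (X3 ω))) ∂P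
      = ∫ x, (∫ y, f1 y ∂(condDistrib X1 X3 P x))
          * (∫ y, f2 y ∂(condDistrib X2 X3 P x)) ∂(P.map X3) :=
    (integral_map hX3.aemeasurable (hg1.mul hg2).aestronglyMeasurable).symm
  have hF : Measurable fun p : Ω1 × Ω2 => f1 p.1 * f2 p.2 :=
    (hf1.comp measurable_fst).mul (hf2.comp measurable_snd)
  have hFb : ∀ p : Ω1 × Ω2, |f1 p.1 * f2 p.2| ≤ C1 * C2 := fun p => by
    rw [abs_mul]
    exact mul_le_mul (hC1 _) (hC2 _) (abs_nonneg _) hC1'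
  have step3 : ∫ p, f1 p.1 * f2 p.2
        ∂(kernelImage (P.map X3) (condDistrib X1 X3 P ×ₖ condDistrib X2 X3 P))
      = ∫ x, (∫ y, f1 y ∂(condDistrib X1 X3 P x))
          * (∫ y, f2 y ∂(condDistrib X2 X3 P x)) ∂(P.map X3) := by
    rw [integral_kernelImage _ _ hF (C1 * C2) hFb]
    refine integral_congr_ae (ae_of_all _ fun x => ?_)
    simp only
    rw [Kernel.prod_apply, integral_prod_mul]
  rw [step1, step2, ← step3]

/-- The Markov kernels `P^{X1|X3}` and `P^{X2|X3}` are `P^{X3}`-independent iff for all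
bounded real measurable `f1, f2`:
`E[E(f1∘X1|X3)·E(f2∘X2|X3)] = E(f1∘X1)·E(f2∘X2)`. -/
theorem stmt4 {Ω Ω1 Ω2 Ω3 : Type*} [MeasurableSpace Ω] [MeasurableSpace Ω1] [MeasurableSpace Ω2]
    [MeasurableSpace Ω3] [StandardBorelSpace Ω1] [Nonempty Ω1] [StandardBorelSpace Ω2]
    [Nonempty Ω2]
    (P : Measure Ω) [IsProbabilityMeasure P]
    (X1 : Ω → Ω1) (X2 : Ω → Ω2) (X3 : Ω → Ω3)
    (hX1 : Measurable X1) (hX2 : Measurable X2) (hX3 : Measurable X3) :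
    KernelIndep (P.map X3) (condDistrib X1 X3 P) (condDistrib X2 X3 P)
      ↔ ∀ (f1 : Ω1 → ℝ) (f2 : Ω2 → ℝ), Measurable f1 → Measurable f2 →
          (∃ C1, ∀ x, |f1 x| ≤ C1) → (∃ C2, ∀ x, |f2 x| ≤ C2) →
          ∫ ω, (P[fun ω' => f1 (X1 ω') | MeasurableSpace.comap X3 inferInstance]) ω
              * (P[fun ω' => f2 (X2 ω') | MeasurableSpace.comap X3 inferInstance]) ω ∂P
            = (∫ ω, f1 (X1 ω) ∂P) * (∫ ω, f2 (X2 ω) ∂P) := by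
  haveI hQp : IsProbabilityMeasure (P.map X3) := Measure.isProbabilityMeasure_map hX3.aemeasurable
  haveI : IsProbabilityMeasure (P.map X1) := Measure.isProbabilityMeasure_map hX1.aemeasurable
  haveI : IsProbabilityMeasure (P.map X2) := Measure.isProbabilityMeasure_map hX2.aemeasurable
  constructor
  · rintro hind f1 f2 hf1 hf2 ⟨C1, hC1⟩ ⟨C2, hC2⟩
    rw [condexp_mul_key P X1 X2 X3 hX1 hX2 hX3 hf1 hf2 hC1 hC2, hind,
      kernelImage_condDistrib P X1 X3 hX1 hX3, kernelImage_condDistrib P X2 X3 hX2 hX3,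
      integral_prod_mul, integral_map hX1.aemeasurable hf1.aestronglyMeasurable,
      integral_map hX2.aemeasurable hf2.aestronglyMeasurable]
  · intro h
    unfold KernelIndep
    haveI := isProbabilityMeasure_kernelImage (P.map X3)
      (condDistrib X1 X3 P ×ₖ condDistrib X2 X3 P)
    rw [kernelImage_condDistrib P X1 X3 hX1 hX3, kernelImage_condDistrib P X2 X3 hX2 hX3]
    refine ext_of_generate_finite _ generateFrom_prod.symm isPiSystem_prod ?_ ?_
    · rintro s ⟨A, hA, B, hB, rfl⟩
      have hmA : Measurable (A.indicator (1 : Ω1 → ℝ)) := measurable_one.indicator hA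
      have hmB : Measurable (B.indicator (1 : Ω2 → ℝ)) := measurable_one.indicator hB
      have hbdd1 : ∀ x : Ω1, |A.indicator (1 : Ω1 → ℝ) x| ≤ 1 := fun x => by
        by_cases hx : x ∈ A <;> simp [Set.indicator_apply, hx]
      have hbdd2 : ∀ x : Ω2, |B.indicator (1 : Ω2 → ℝ) x| ≤ 1 := fun x => by
        by_cases hx : x ∈ B <;> simp [Set.indicator_apply, hx]
      have hh := h (A.indicator 1) (B.indicator 1) hmA hmB ⟨1, hbdd1⟩ ⟨1, hbdd2⟩
      rw [condexp_mul_key P X1 X2 X3 hX1 hX2 hX3 hmA hmB hbdd1 hbdd2] at hh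
      have e1 : ∫ p : Ω1 × Ω2, A.indicator (1 : Ω1 → ℝ) p.1 * B.indicator (1 : Ω2 → ℝ) p.2
            ∂(kernelImage (P.map X3) (condDistrib X1 X3 P ×ₖ condDistrib X2 X3 P))
          = ((kernelImage (P.map X3) (condDistrib X1 X3 P ×ₖ condDistrib X2 X3 P))
              (A ×ˢ B)).toReal := by
        rw [← measureReal_def, ← integral_indicator_one (hA.prod hB)]
        exact integral_congr_ae (ae_of_all _ fun p => Set.indicator_prod_one.symm)
      have e2 : ∫ ω, A.indicator (1 : Ω1 → ℝ) (X1 ω) ∂P = ((P.map X1) A).toReal := by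
        rw [← integral_map hX1.aemeasurable hmA.aestronglyMeasurable, integral_indicator_one hA, measureReal_def]
      have e3 : ∫ ω, B.indicator (1 : Ω2 → ℝ) (X2 ω) ∂P = ((P.map X2) B).toReal := by
        rw [← integral_map hX2.aemeasurable hmB.aestronglyMeasurable, integral_indicator_one hB, measureReal_def]
      rw [e1, e2, e3, ← ENNReal.toReal_mul] at hh
      rw [Measure.prod_prod]
      exact (ENNReal.toReal_eq_toReal_iff' (measure_ne_top _ _)
        (ENNReal.mul_ne_top (measure_ne_top _ _) (measure_ne_top _ _))).mp hh
    · simp [measure_univ]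
end

section
/- Extension to Markov kernels: Let M_i : (Ω,𝒜,P) ⇝ (Ω_i,𝒜_i), i=1,2,3, be Markov kernels (with spaces regular enough that conditional distributions of kernels exist). If M1 and M2 are conditionally independent given M3, then M1 and M2 are P-independent if and only if the kernels P^{M1|M3} and P^{M2|M3} are independent with respect to P^{M3}. -/
open MeasureTheory ProbabilityTheory
open scoped ENNReal

/-- `L : Ω2 ⇝ Ω1` is a (regular) conditional distribution of the kernel `M1` given the kernel
`M2` on the probability space `(Ω, P)`:
`∫ M1(ω,A1)·M2(ω,A2) dP(ω) = ∫_{A2} L(ω2,A1) dP^{M2}(ω2)` for all measurable `A1, A2`. -/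
def IsCondDistribKernel {Ω Ω1 Ω2 : Type*} [MeasurableSpace Ω] [MeasurableSpace Ω1]
    [MeasurableSpace Ω2] (P : Measure Ω) (M1 : ProbabilityTheory.Kernel Ω Ω1)
    (M2 : ProbabilityTheory.Kernel Ω Ω2) (L : ProbabilityTheory.Kernel Ω2 Ω1) : Prop :=
  ∀ A1 A2 : Set _, MeasurableSet A1 → MeasurableSet A2 →
    ∫⁻ ω, M1 ω A1 * M2 ω A2 ∂P = ∫⁻ ω2 in A2, L ω2 A1 ∂(kernelImage P M2)

lemma image_eq_of_condDistrib {Ω Ω3 β : Type*} [MeasurableSpace Ω] [MeasurableSpace Ω3]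
    [MeasurableSpace β] (P : Measure Ω) (M : ProbabilityTheory.Kernel Ω β)
    (M3 : ProbabilityTheory.Kernel Ω Ω3) [IsMarkovKernel M3]
    (L : ProbabilityTheory.Kernel Ω3 β) (h : IsCondDistribKernel P M M3 L) :
    kernelImage P M = kernelImage (kernelImage P M3) L := by
  ext s hs
  have := h s Set.univ hs MeasurableSet.univ
  simp only [measure_univ, mul_one, Measure.restrict_univ] at this
  rw [kernelImage, Measure.bind_apply hs (Kernel.measurable M).aemeasurable, this]
  exact (Measure.bind_apply hs (Kernel.measurable L).aemeasurable).symm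

lemma kernelImage_congr_ae {α β : Type*} [MeasurableSpace α] [MeasurableSpace β]
    (Q : Measure α) (K K' : ProbabilityTheory.Kernel α β)
    (h : ∀ᵐ a ∂Q, K a = K' a) : kernelImage Q K = kernelImage Q K' := by
  ext s hs
  rw [kernelImage, Measure.bind_apply hs (Kernel.measurable K).aemeasurable,
    kernelImage, Measure.bind_apply hs (Kernel.measurable K').aemeasurable]
  exact lintegral_congr_ae (h.mono fun a ha => by simp only [ha])

/-- Extension of the main theorem to Markov kernels: if `M1` and `M2` are conditionally
independent given `M3` (the conditional distribution of `M1 ×ₖ M2` given `M3` agrees a.s. with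
the product of the conditional distributions of `M1` and `M2` given `M3`), then `M1` and `M2`
are `P`-independent iff the kernels `P^{M1|M3}` and `P^{M2|M3}` are `P^{M3}`-independent. -/
theorem stmt12 {Ω Ω1 Ω2 Ω3 : Type*} [MeasurableSpace Ω] [MeasurableSpace Ω1]
    [MeasurableSpace Ω2] [MeasurableSpace Ω3]
    (P : Measure Ω) [IsProbabilityMeasure P]
    (M1 : ProbabilityTheory.Kernel Ω Ω1) (M2 : ProbabilityTheory.Kernel Ω Ω2)
    (M3 : ProbabilityTheory.Kernel Ω Ω3)
    [IsMarkovKernel M1] [IsMarkovKernel M2] [IsMarkovKernel M3]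
    (L1 : ProbabilityTheory.Kernel Ω3 Ω1) (L2 : ProbabilityTheory.Kernel Ω3 Ω2)
    (L12 : ProbabilityTheory.Kernel Ω3 (Ω1 × Ω2))
    [IsMarkovKernel L1] [IsMarkovKernel L2] [IsMarkovKernel L12]
    (hL1 : IsCondDistribKernel P M1 M3 L1)
    (hL2 : IsCondDistribKernel P M2 M3 L2)
    (hL12 : IsCondDistribKernel P (M1 ×ₖ M2) M3 L12)
    (hci : ∀ᵐ ω3 ∂(kernelImage P M3), L12 ω3 = (L1 ×ₖ L2) ω3) :
    KernelIndep P M1 M2 ↔ KernelIndep (kernelImage P M3) L1 L2 := by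
  have h1 := image_eq_of_condDistrib P M1 M3 L1 hL1
  have h2 := image_eq_of_condDistrib P M2 M3 L2 hL2
  have h12 := image_eq_of_condDistrib P (M1 ×ₖ M2) M3 L12 hL12
  have h12' := kernelImage_congr_ae (kernelImage P M3) L12 (L1 ×ₖ L2) hci
  unfold KernelIndep
  rw [h1, h2, h12, h12']
end
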